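/- For all n ≥ 2 and k ≥ 8, the number of n-ary quasigroups of order k satisfies |Q(n,k)| ≥ 2^{⌊k/4⌋^n}. -/

import Mathlib

set_option linter.unusedSectionVars false
set_option linter.unusedVariables false
set_option maxHeartbeats 1000000



def IsNQuasigroup {S : Type*} {n : ℕ} (f : (Fin n → S) → S) : Prop :=
  ∀ (i : Fin n) (x : Fin n → S), Function.Bijective fun a => f (Function.update x i a)

/-- Two naturals congruent mod `r` and within distance `< r` are equal. -/
lemma eq_of_modeq_small {a b r : ℕ} (h : a % r = b % r) (h1 : a < b + r) (h2 : b < a + r) :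
    a = b := by
  rcases le_total a b with hle | hle
  · have hd := (Nat.modEq_iff_dvd' hle).mp h
    have := Nat.eq_zero_of_dvd_of_lt hd
    omega
  · have hd := (Nat.modEq_iff_dvd' hle).mp h.symm
    have := Nat.eq_zero_of_dvd_of_lt hd
    omega

lemma cancel_two {r a b : ℕ} (hr : r % 2 = 1) (ha : a < r) (hb : b < r)
    (h : (2 * a) % r = (2 * b) % r) : a = b := by
  have hco : Nat.Coprime 2 r := (Nat.Prime.coprime_iff_not_dvd Nat.prime_two).mpr (by omega)
  have := Nat.ModEq.cancel_left_of_coprime (c := 2) (a := a) (b := b) hco.symm h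
  exact eq_of_modeq_small this (by omega) (by omega)

section Swap

variable {G : Type*} [AddCommGroup G] [Fintype G] [DecidableEq G] {n m : ℕ}

/-- The switching family of `n`-ary quasigroups on a group with an order-2 element. -/
def swapFun (τ : G) (h : G → Fin m) (g : (Fin n → Fin m) → Bool) :
    (Fin n → G) → G :=
  fun x => (∑ i, x i) + (if g (fun i => h (x i)) then τ else 0)

lemma swapFun_isNQuasigroup (τ : G) (hτ2 : τ + τ = 0) (hτ : τ ≠ 0)
    (h : G → Fin m) (hh : ∀ x, h (x + τ) = h x) (g : (Fin n → Fin m) → Bool) :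
    IsNQuasigroup (swapFun τ h g) := by
  intro i x
  rw [← Finite.injective_iff_bijective]
  intro a b hab
  have hupd : ∀ c : G, (fun j => h (Function.update x i c j)) =
      Function.update (fun j => h (x j)) i (h c) := by
    intro c
    exact Function.comp_update h x i c
  have hsum : ∀ c : G, (∑ j, Function.update x i c j) = c + ∑ j ∈ Finset.univ \ {i}, x j :=
    fun c => Finset.sum_update_of_mem (Finset.mem_univ i) x c
  simp only [swapFun, hupd, hsum] at hab
  set C := ∑ j ∈ Finset.univ \ {i}, x j with hC
  by_cases hg : g (Function.update (fun j => h (x j)) i (h a)) =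
      g (Function.update (fun j => h (x j)) i (h b))
  · rw [hg] at hab
    exact add_right_cancel (add_right_cancel hab)
  · exfalso
    rcases Bool.eq_false_or_eq_true (g (Function.update (fun j => h (x j)) i (h a))) with h1 | h1 <;>
      rcases Bool.eq_false_or_eq_true (g (Function.update (fun j => h (x j)) i (h b))) with h2 | h2
    · exact hg (h1.trans h2.symm)
    · -- a: false, b: true
      rw [h1, h2] at hab
      norm_num at hab
      -- hab : a + C + τ = b + C
      have hba : b = a + τ := by
        apply add_right_cancel (b := C)
        rw [← hab]; abel
      have hhab : h b = h a := by rw [hba, hh]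
      rw [hhab] at hg
      exact hg rfl
    · rw [h1, h2] at hab
      norm_num at hab
      -- hab : a + C = b + C + τ
      have hba : a = b + τ := by
        apply add_right_cancel (b := C)
        rw [hab]; abel
      have hhab : h a = h b := by rw [hba, hh]
      rw [hhab] at hg
      exact hg rfl
    · exact hg (h1.trans h2.symm)

lemma swapFun_eq_at (τ : G) (hτ : τ ≠ 0) (h : G → Fin m)
    (s : Fin m → G) (hs : ∀ v, h (s v) = v) {g g' : (Fin n → Fin m) → Bool}
    (v : Fin n → Fin m)
    (hgv : swapFun τ h g (fun i => s (v i)) = swapFun τ h g' (fun i => s (v i))) :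
    g v = g' v := by
  simp only [swapFun] at hgv
  have hv : (fun i => h (s (v i))) = v := by funext i; rw [hs]
  rw [hv] at hgv
  have h2 : (if g v then τ else 0) = (if g' v then τ else 0) := add_left_cancel hgv
  rcases Bool.eq_false_or_eq_true (g v) with h1 | h1 <;>
    rcases Bool.eq_false_or_eq_true (g' v) with h3 | h3 <;>
      rw [h1, h3] <;> rw [h1, h3] at h2 <;> simp_all

end Swap



section Transport

variable {S T : Type*} {n : ℕ}

lemma IsNQuasigroup.transport (e : S ≃ T) {f : (Fin n → S) → S} (hf : IsNQuasigroup f) :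
    IsNQuasigroup (fun x : Fin n → T => e (f fun i => e.symm (x i))) := by
  intro i x
  have key : ∀ a : T, (fun j => e.symm (Function.update x i a j)) =
      Function.update (fun j => e.symm (x j)) i (e.symm a) := fun a =>
    Function.comp_update e.symm x i a
  simp only [key]
  have : (fun a : T => e (f (Function.update (fun j => e.symm (x j)) i (e.symm a)))) =
      e ∘ (fun b => f (Function.update (fun j => e.symm (x j)) i b)) ∘ e.symm := rfl
  rw [this]
  exact (e.bijective.comp (hf i _)).comp e.symm.bijective

end Transport

section Glue

variable {k n : ℕ}

lemma glue_isNQuasigroup (p : Fin k → Prop) [DecidablePred p]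
    (f0 f1 : (Fin n → Fin k) → Fin k)
    (hf0 : IsNQuasigroup f0)
    (hf0p : ∀ x, (∀ i, p (x i)) → p (f0 x))
    (hf1p : ∀ x, p (f1 x))
    (hf1inj : ∀ (i : Fin n) (x : Fin n → Fin k), (∀ j, j ≠ i → p (x j)) → ∀ a b, p a → p b →
      f1 (Function.update x i a) = f1 (Function.update x i b) → a = b) :
    IsNQuasigroup (fun x => if ∀ i, p (x i) then f1 x else f0 x) := by
  intro i x
  rw [← Finite.injective_iff_bijective]
  intro a b hab
  by_cases hrest : ∀ j, j ≠ i → p (x j)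
  · -- condition on update x i c  ↔  p c
    have hcond : ∀ c : Fin k, (∀ j, p (Function.update x i c j)) ↔ p c := by
      intro c
      constructor
      · intro hc
        have := hc i
        rwa [Function.update_self] at this
      · intro hc j
        rcases eq_or_ne j i with rfl | hj
        · rwa [Function.update_self]
        · rw [Function.update_of_ne hj]; exact hrest j hj
    -- key: f0-coordinate map sends non-p to non-p
    have hf0out : ∀ c : Fin k, ¬ p c → ¬ p (f0 (Function.update x i c)) := by
      intro c hc hpc
      -- the p-set is mapped onto itself by the injective coordinate map
      classical
      set F : Fin k → Fin k := fun a => f0 (Function.update x i a) with hF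
      have hFinj : Function.Injective F := (hf0 i x).injective
      have hsub : (Finset.univ.filter p).image F ⊆ Finset.univ.filter p := by
        intro y hy
        simp only [Finset.mem_image, Finset.mem_filter, Finset.mem_univ, true_and] at hy ⊢
        obtain ⟨a, ha, rfl⟩ := hy
        exact hf0p _ ((hcond a).mpr ha)
      have hcard : ((Finset.univ.filter p).image F).card = (Finset.univ.filter p).card :=
        Finset.card_image_of_injective _ hFinj
      have heq : (Finset.univ.filter p).image F = Finset.univ.filter p :=
        Finset.eq_of_subset_of_card_le hsub (le_of_eq hcard.symm)
      have : F c ∈ (Finset.univ.filter p).image F := by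
        rw [heq]; simp only [Finset.mem_filter, Finset.mem_univ, true_and]; exact hpc
      simp only [Finset.mem_image, Finset.mem_filter, Finset.mem_univ, true_and] at this
      obtain ⟨a, ha, hFa⟩ := this
      exact hc (hFinj hFa ▸ ha)
    simp only at hab
    by_cases hpa : p a <;> by_cases hpb : p b
    · rw [if_pos ((hcond a).mpr hpa), if_pos ((hcond b).mpr hpb)] at hab
      exact hf1inj i x hrest a b hpa hpb hab
    · rw [if_pos ((hcond a).mpr hpa), if_neg (fun hh => hpb ((hcond b).mp hh))] at hab
      exact absurd (hab ▸ hf1p (Function.update x i a)) (hf0out b hpb)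
    · rw [if_neg (fun hh => hpa ((hcond a).mp hh)), if_pos ((hcond b).mpr hpb)] at hab
      exact absurd (hab.symm ▸ hf1p (Function.update x i b)) (hf0out a hpa)
    · rw [if_neg (fun hh => hpa ((hcond a).mp hh)), if_neg (fun hh => hpb ((hcond b).mp hh))] at hab
      exact (hf0 i x).injective hab
  · -- some other coordinate fails p: always use f0
    push_neg at hrest
    obtain ⟨j, hji, hpj⟩ := hrest
    have hcond : ∀ c : Fin k, ¬ ∀ j', p (Function.update x i c j') := by
      intro c hc
      have := hc j
      rw [Function.update_of_ne hji] at this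
      exact hpj this
    simp only [if_neg (hcond a), if_neg (hcond b)] at hab
    exact (hf0 i x).injective hab

end Glue

section Comp

variable {k : ℕ}

def compFun (L : Fin k → Fin k → Fin k) : ∀ {n : ℕ}, (Fin (n + 1) → Fin k) → Fin k
  | 0, x => x 0
  | (_ + 1), x => L (x 0) (compFun L (x ∘ Fin.succ))

lemma compFun_isNQuasigroup (L : Fin k → Fin k → Fin k)
    (hrow : ∀ a, Function.Bijective (L a))
    (hcol : ∀ b, Function.Bijective (fun a => L a b)) :
    ∀ {n : ℕ}, IsNQuasigroup (compFun L (n := n)) := by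
  intro n
  induction n with
  | zero =>
    intro i x
    have : i = 0 := Fin.ext (by omega)
    subst this
    have : (fun a => compFun L (Function.update x 0 a)) = id := by
      funext a
      simp [compFun]
    rw [this]
    exact Function.bijective_id
  | succ n ih =>
    intro i x
    induction i using Fin.cases with
    | zero =>
      have : (fun a => compFun L (Function.update x 0 a)) =
          fun a => L a (compFun L (x ∘ Fin.succ)) := by
        funext a
        show L (Function.update x 0 a 0) (compFun L (Function.update x 0 a ∘ Fin.succ)) = _
        have h1 : Function.update x 0 a 0 = a := by simp
        have h2 : Function.update x 0 a ∘ Fin.succ = x ∘ Fin.succ := by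
          funext j
          simp only [Function.comp_apply]
          exact Function.update_of_ne (Fin.succ_ne_zero j) a x
        rw [h1, h2]
      rw [this]
      exact hcol _
    | succ j =>
      have key : ∀ a, Function.update x j.succ a ∘ Fin.succ =
          Function.update (x ∘ Fin.succ) j a := by
        intro a
        funext l
        simp only [Function.comp_apply]
        rcases eq_or_ne l j with rfl | hl
        · rw [Function.update_self, Function.update_self]
        · rw [Function.update_of_ne hl, Function.update_of_ne (fun hc => hl (Fin.succ_injective _ hc))]
          rfl
      have : (fun a => compFun L (Function.update x j.succ a)) =
          (L (x 0)) ∘ (fun a => compFun L (Function.update (x ∘ Fin.succ) j a)) := by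
        funext a
        show L (Function.update x j.succ a 0) (compFun L (Function.update x j.succ a ∘ Fin.succ)) = _
        rw [key, Function.update_of_ne (Fin.succ_ne_zero j).symm]
        rfl
      rw [this]
      exact (hrow (x 0)).comp (ih j (x ∘ Fin.succ))

lemma compFun_mem (L : Fin k → Fin k → Fin k) (d : ℕ)
    (hL : ∀ a b : Fin k, a.val < d → b.val < d → (L a b).val < d) :
    ∀ {n : ℕ} (x : Fin (n + 1) → Fin k), (∀ i, (x i).val < d) → (compFun L x).val < d := by
  intro n
  induction n with
  | zero => intro x hx; exact hx 0
  | succ n ih =>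
    intro x hx
    exact hL _ _ (hx 0) (ih (x ∘ Fin.succ) (fun i => hx i.succ))

end Comp



/-- The Latin square of order `d + r` with a cyclic subsquare of order `d` in the
top-left corner (requires `d ≤ r` and `r` odd). -/
def Lnat (d r x y : ℕ) : ℕ :=
  if x < d then
    if y < d then (x + y) % d
    else d + (2 * (y - d) + x) % r
  else
    if y < d then d + (2 * (x - d) + (r - y)) % r
    else if (x - d + (r - (y - d))) % r < d then (x - d + (r - (y - d))) % r
    else d + ((x - d + (y - d)) % r)

lemma Lnat_lt {d r : ℕ} (hd : 0 < d) (hr : 0 < r) (x y : ℕ) : Lnat d r x y < d + r := by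
  unfold Lnat
  split_ifs with h1 h2 h3 h4
  · have := Nat.mod_lt (x + y) hd; omega
  · have := Nat.mod_lt (2 * (y - d) + x) hr; omega
  · have := Nat.mod_lt (2 * (x - d) + (r - y)) hr; omega
  · omega
  · have := Nat.mod_lt (x - d + (y - d)) hr; omega

lemma Lnat_sub {d r x y : ℕ} (hd : 0 < d) (hx : x < d) (hy : y < d) :
    Lnat d r x y = (x + y) % d ∧ Lnat d r x y < d := by
  unfold Lnat
  rw [if_pos hx, if_pos hy]
  exact ⟨rfl, Nat.mod_lt _ hd⟩

private lemma L1 {d r i j y : ℕ} (hdr : d ≤ r) (hj : j < r) (hy : y < d)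
    (h : (2 * i + (r - y)) % r = (i + j) % r) : (i + (r - j)) % r = y := by
  have h1 : (2 * i + (r - y)) + y ≡ (i + j) + y [MOD r] := Nat.ModEq.add_right y h
  have e1 : (2 * i + (r - y)) + y = 2 * i + r := by omega
  rw [e1] at h1
  have h2 : (i + (r - j)) + (i + j) ≡ y + (i + j) [MOD r] := by
    have e2 : (i + (r - j)) + (i + j) = 2 * i + r := by omega
    have e3 : y + (i + j) = (i + j) + y := by omega
    rw [e2, e3]; exact h1
  have h3 : i + (r - j) ≡ y [MOD r] := Nat.ModEq.add_right_cancel' (i + j) h2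
  have : (i + (r - j)) % r = y % r := h3
  rw [this, Nat.mod_eq_of_lt (lt_of_lt_of_le hy hdr)]

private lemma L1' {d r i j x : ℕ} (hdr : d ≤ r) (hj : j < r) (hx : x < d)
    (h : (2 * j + x) % r = (i + j) % r) : (i + (r - j)) % r = x := by
  have h1 : (2 * j + x) + (r - j) ≡ (i + j) + (r - j) [MOD r] := Nat.ModEq.add_right _ h
  have e1 : (2 * j + x) + (r - j) = (j + x) + r := by omega
  have e2 : (i + j) + (r - j) = i + r := by omega
  rw [e1, e2] at h1
  have h2 : j + x ≡ i [MOD r] := Nat.ModEq.add_right_cancel' r h1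
  have h3 : (i + (r - j)) + j ≡ x + j [MOD r] := by
    have e3 : (i + (r - j)) + j = i + r := by omega
    rw [e3]
    have h4 : i + r ≡ (j + x) + r [MOD r] := Nat.ModEq.add_right r h2.symm
    have e4 : (j + x) + r = (x + j) + r := by omega
    rw [e4] at h4
    exact h4.trans (Nat.add_mod_right (x + j) r)
  have h5 : i + (r - j) ≡ x [MOD r] := Nat.ModEq.add_right_cancel' j h3
  have : (i + (r - j)) % r = x % r := h5
  rw [this, Nat.mod_eq_of_lt (lt_of_lt_of_le hx hdr)]

lemma Lnat_row_inj {d r : ℕ} (hd : 0 < d) (hdr : d ≤ r) (hro : r % 2 = 1)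
    {x y1 y2 : ℕ} (hy1 : y1 < d + r) (hy2 : y2 < d + r)
    (h : Lnat d r x y1 = Lnat d r x y2) : y1 = y2 := by
  have hr : 0 < r := by omega
  unfold Lnat at h
  by_cases hx : x < d
  · simp only [if_pos hx] at h
    by_cases h1 : y1 < d <;> by_cases h2 : y2 < d
    · simp only [if_pos h1, if_pos h2] at h
      have h' : x + y1 ≡ x + y2 [MOD d] := h
      have := Nat.ModEq.add_left_cancel' x h'
      exact eq_of_modeq_small this (by omega) (by omega)
    · simp only [if_pos h1, if_neg h2] at h
      have := Nat.mod_lt (x + y1) hd; omega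
    · simp only [if_neg h1, if_pos h2] at h
      have := Nat.mod_lt (x + y2) hd; omega
    · simp only [if_neg h1, if_neg h2] at h
      have h' : (2 * (y1 - d) + x) % r = (2 * (y2 - d) + x) % r := by omega
      have h'' := Nat.ModEq.add_right_cancel' x (h' : _ ≡ _ [MOD r])
      have := cancel_two hro (a := y1 - d) (b := y2 - d) (by omega) (by omega) h''
      omega
  · simp only [if_neg hx] at h
    by_cases h1 : y1 < d <;> by_cases h2 : y2 < d
    · simp only [if_pos h1, if_pos h2] at h
      have h' : (2 * (x - d) + (r - y1)) % r = (2 * (x - d) + (r - y2)) % r := by omega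
      have h'' := Nat.ModEq.add_left_cancel' (2 * (x - d)) (h' : _ ≡ _ [MOD r])
      have := eq_of_modeq_small h'' (by omega) (by omega)
      omega
    · simp only [if_pos h1, if_neg h2] at h
      by_cases hc : (x - d + (r - (y2 - d))) % r < d
      · simp only [if_pos hc] at h; omega
      · simp only [if_neg hc] at h
        have h' : (2 * (x - d) + (r - y1)) % r = (x - d + (y2 - d)) % r := by omega
        have := L1 hdr (j := y2 - d) (by omega) h1 h'
        omega
    · simp only [if_neg h1, if_pos h2] at h
      by_cases hc : (x - d + (r - (y1 - d))) % r < d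
      · simp only [if_pos hc] at h; omega
      · simp only [if_neg hc] at h
        have h' : (2 * (x - d) + (r - y2)) % r = (x - d + (y1 - d)) % r := by omega
        have := L1 hdr (j := y1 - d) (by omega) h2 h'
        omega
    · simp only [if_neg h1, if_neg h2] at h
      by_cases hc1 : (x - d + (r - (y1 - d))) % r < d <;>
        by_cases hc2 : (x - d + (r - (y2 - d))) % r < d
      · simp only [if_pos hc1, if_pos hc2] at h
        have h'' := Nat.ModEq.add_left_cancel' (x - d) (h : _ ≡ _ [MOD r])
        have := eq_of_modeq_small h'' (by omega) (by omega)
        omega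
      · simp only [if_pos hc1, if_neg hc2] at h; omega
      · simp only [if_neg hc1, if_pos hc2] at h; omega
      · simp only [if_neg hc1, if_neg hc2] at h
        have h' : (x - d + (y1 - d)) % r = (x - d + (y2 - d)) % r := by omega
        have h'' := Nat.ModEq.add_left_cancel' (x - d) (h' : _ ≡ _ [MOD r])
        have := eq_of_modeq_small h'' (by omega) (by omega)
        omega

lemma Lnat_col_inj {d r : ℕ} (hd : 0 < d) (hdr : d ≤ r) (hro : r % 2 = 1)
    {y x1 x2 : ℕ} (hx1 : x1 < d + r) (hx2 : x2 < d + r) (hy : y < d + r)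
    (h : Lnat d r x1 y = Lnat d r x2 y) : x1 = x2 := by
  have hr : 0 < r := by omega
  unfold Lnat at h
  by_cases hyd : y < d
  · simp only [if_pos hyd, if_pos hyd] at h
    by_cases h1 : x1 < d <;> by_cases h2 : x2 < d
    · simp only [if_pos h1, if_pos h2] at h
      have h' : x1 + y ≡ x2 + y [MOD d] := h
      have := Nat.ModEq.add_right_cancel' y h'
      exact eq_of_modeq_small this (by omega) (by omega)
    · simp only [if_pos h1, if_neg h2] at h
      have := Nat.mod_lt (x1 + y) hd; omega
    · simp only [if_neg h1, if_pos h2] at h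
      have := Nat.mod_lt (x2 + y) hd; omega
    · simp only [if_neg h1, if_neg h2] at h
      have h' : (2 * (x1 - d) + (r - y)) % r = (2 * (x2 - d) + (r - y)) % r := by omega
      have h'' := Nat.ModEq.add_right_cancel' (r - y) (h' : _ ≡ _ [MOD r])
      have := cancel_two hro (a := x1 - d) (b := x2 - d) (by omega) (by omega) h''
      omega
  · simp only [if_neg hyd, if_neg hyd] at h
    by_cases h1 : x1 < d <;> by_cases h2 : x2 < d
    · simp only [if_pos h1, if_pos h2] at h
      have h' : (2 * (y - d) + x1) % r = (2 * (y - d) + x2) % r := by omega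
      have h'' := Nat.ModEq.add_left_cancel' (2 * (y - d)) (h' : _ ≡ _ [MOD r])
      exact eq_of_modeq_small h'' (by omega) (by omega)
    · simp only [if_pos h1, if_neg h2] at h
      by_cases hc : (x2 - d + (r - (y - d))) % r < d
      · simp only [if_pos hc] at h; omega
      · simp only [if_neg hc] at h
        have h' : (2 * (y - d) + x1) % r = (x2 - d + (y - d)) % r := by omega
        have := L1' hdr (i := x2 - d) (j := y - d) (by omega) h1 h'
        omega
    · simp only [if_neg h1, if_pos h2] at h
      by_cases hc : (x1 - d + (r - (y - d))) % r < d
      · simp only [if_pos hc] at h; omega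
      · simp only [if_neg hc] at h
        have h' : (2 * (y - d) + x2) % r = (x1 - d + (y - d)) % r := by omega
        have := L1' hdr (i := x1 - d) (j := y - d) (by omega) h2 h'
        omega
    · simp only [if_neg h1, if_neg h2] at h
      by_cases hc1 : (x1 - d + (r - (y - d))) % r < d <;>
        by_cases hc2 : (x2 - d + (r - (y - d))) % r < d
      · simp only [if_pos hc1, if_pos hc2] at h
        have h'' := Nat.ModEq.add_right_cancel' (r - (y - d)) (h : _ ≡ _ [MOD r])
        have := eq_of_modeq_small h'' (by omega) (by omega)
        omega
      · simp only [if_pos hc1, if_neg hc2] at h; omega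
      · simp only [if_neg hc1, if_pos hc2] at h; omega
      · simp only [if_neg hc1, if_neg hc2] at h
        have h' : (x1 - d + (y - d)) % r = (x2 - d + (y - d)) % r := by omega
        have h'' := Nat.ModEq.add_right_cancel' (y - d) (h' : _ ≡ _ [MOD r])
        have := eq_of_modeq_small h'' (by omega) (by omega)
        omega


noncomputable def numQuasigroups (n k : ℕ) : ℕ :=
  Nat.card {f : (Fin n → Fin k) → Fin k // IsNQuasigroup f}

lemma card_le_numQuasigroups {n k m : ℕ}
    (Φ : ((Fin n → Fin m) → Bool) → {f : (Fin n → Fin k) → Fin k // IsNQuasigroup f})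
    (hΦ : Function.Injective Φ) : 2 ^ m ^ n ≤ numQuasigroups n k := by
  have h1 := Nat.card_le_card_of_injective Φ hΦ
  rw [Nat.card_eq_fintype_card, Fintype.card_fun, Fintype.card_fun, Fintype.card_bool,
    Fintype.card_fin, Fintype.card_fin] at h1
  exact h1

theorem numQuasigroups_ge_of_eight_le {n k : ℕ} (hn : 2 ≤ n) (hk : 8 ≤ k) :
    numQuasigroups n k ≥ 2 ^ (k / 4) ^ n := by
  obtain ⟨N, rfl⟩ : ∃ N, n = N + 1 := ⟨n - 1, by omega⟩
  set m := k / 4 with hm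
  have hm2 : 2 ≤ m := by omega
  rw [ge_iff_le]
  rcases Nat.even_or_odd k with hke | hko
  · -- EVEN CASE: work on ZMod 2 × ZMod (k/2)
    have hke' : k % 2 = 0 := by
      obtain ⟨c, hc⟩ := hke; omega
    set l := k / 2 with hl
    have hml : m ≤ l := by omega
    haveI : NeZero l := ⟨by omega⟩
    set τ : ZMod 2 × ZMod l := (1, 0) with hτ
    have hτ2 : τ + τ = 0 := by
      rw [Prod.ext_iff]
      constructor
      · show (1 : ZMod 2) + 1 = 0; decide
      · show (0 : ZMod l) + 0 = 0; simp
    have hτ0 : τ ≠ 0 := by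
      intro hc
      rw [Prod.ext_iff] at hc
      have : (1 : ZMod 2) = 0 := hc.1
      simp at this
    set h : ZMod 2 × ZMod l → Fin m := fun z => ⟨min z.2.val (m - 1), by omega⟩ with hhdef
    have hh : ∀ x, h (x + τ) = h x := by
      intro x
      apply Fin.ext
      show min (x + τ).2.val (m - 1) = min x.2.val (m - 1)
      have : (x + τ).2 = x.2 := by
        show x.2 + (0 : ZMod l) = x.2
        simp
      rw [this]
    set s : Fin m → ZMod 2 × ZMod l := fun v => (0, ((v : ℕ) : ZMod l)) with hsdef
    have hs : ∀ v, h (s v) = v := by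
      intro v
      apply Fin.ext
      show min (((v : ℕ) : ZMod l)).val (m - 1) = (v : ℕ)
      rw [ZMod.val_natCast, Nat.mod_eq_of_lt (by omega : (v : ℕ) < l)]
      have := v.isLt
      omega
    have hcard : Fintype.card (ZMod 2 × ZMod l) = k := by
      rw [Fintype.card_prod, ZMod.card, ZMod.card]
      omega
    set e : (ZMod 2 × ZMod l) ≃ Fin k := Fintype.equivFinOfCardEq hcard with he
    set Φ : ((Fin (N + 1) → Fin m) → Bool) →
        {f : (Fin (N + 1) → Fin k) → Fin k // IsNQuasigroup f} :=
      fun g => ⟨fun x => e (swapFun τ h g fun i => e.symm (x i)),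
        (swapFun_isNQuasigroup τ hτ2 hτ0 h hh g).transport e⟩ with hΦdef
    have hΦ : Function.Injective Φ := by
      intro g g' hgg
      funext v
      have h1 := congrArg Subtype.val hgg
      have h2 := congrFun h1 (fun i => e (s (v i)))
      simp only [hΦdef, Equiv.symm_apply_apply] at h2
      exact swapFun_eq_at τ hτ0 h s hs v (e.injective h2)
    exact card_le_numQuasigroups Φ hΦ
  · -- ODD CASE
    have hko' : k % 2 = 1 := by
      obtain ⟨c, hc⟩ := hko; omega
    set d := 2 * m with hd'
    set r := k - d with hr'
    have hd : 0 < d := by omega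
    have hdr : d ≤ r := by omega
    have hro : r % 2 = 1 := by omega
    have hdrk : d + r = k := by omega
    have hrpos : 0 < r := by omega
    -- the Latin square with cyclic subsquare of order d
    set L : Fin k → Fin k → Fin k := fun x y =>
      ⟨Lnat d r x.val y.val, by
        have := Lnat_lt hd hrpos x.val y.val; omega⟩ with hLdef
    have hrow : ∀ a, Function.Bijective (L a) := by
      intro a
      rw [← Finite.injective_iff_bijective]
      intro y1 y2 hy
      exact Fin.ext (Lnat_row_inj hd hdr hro (by omega) (by omega) (congrArg Fin.val hy))
    have hcol : ∀ b, Function.Bijective (fun a => L a b) := by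
      intro b
      rw [← Finite.injective_iff_bijective]
      intro x1 x2 hx
      exact Fin.ext (Lnat_col_inj hd hdr hro (by omega) (by omega) (by omega)
        (congrArg Fin.val hx))
    set f0 : (Fin (N + 1) → Fin k) → Fin k := compFun L with hf0def
    have hf0 : IsNQuasigroup f0 := compFun_isNQuasigroup L hrow hcol
    have hf0p : ∀ x : Fin (N + 1) → Fin k, (∀ i, (x i).val < d) → (f0 x).val < d := by
      intro x hx
      exact compFun_mem L d (fun a b ha hb => (Lnat_sub hd ha hb).2) x hx
    -- the switching family on ZMod (2*m) = the subsquare alphabet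
    haveI : NeZero (2 * m) := ⟨by omega⟩
    set τ : ZMod (2 * m) := ((m : ℕ) : ZMod (2 * m)) with hτdef
    have hτ2 : τ + τ = 0 := by
      rw [hτdef, ← Nat.cast_add, show m + m = 2 * m by ring, ZMod.natCast_self]
    have hτ0 : τ ≠ 0 := by
      intro hc
      have h1 := congrArg ZMod.val hc
      rw [hτdef, ZMod.val_natCast, ZMod.val_zero, Nat.mod_eq_of_lt (by omega)] at h1
      omega
    set h : ZMod (2 * m) → Fin m := fun z => ⟨z.val % m, Nat.mod_lt _ (by omega)⟩ with hhdef
    have hh : ∀ x, h (x + τ) = h x := by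
      intro x
      apply Fin.ext
      show (x + τ).val % m = x.val % m
      rw [ZMod.val_add, hτdef, ZMod.val_natCast, Nat.mod_eq_of_lt (show m < 2 * m by omega),
        Nat.mod_mod_of_dvd _ ⟨2, by ring⟩]
      exact Nat.add_mod_right x.val m
    set s : Fin m → ZMod (2 * m) := fun v => ((v : ℕ) : ZMod (2 * m)) with hsdef
    have hs : ∀ v, h (s v) = v := by
      intro v
      apply Fin.ext
      show (((v : ℕ) : ZMod (2 * m))).val % m = (v : ℕ)
      have hvlt := v.isLt
      have e1 : (v : ℕ) % (2 * m) = (v : ℕ) := Nat.mod_eq_of_lt (by omega)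
      rw [ZMod.val_natCast, e1, Nat.mod_eq_of_lt (by omega)]
    -- cast helpers between Fin k and ZMod (2*m)
    set c : Fin k → ZMod (2 * m) := fun z => ((z.val : ℕ) : ZMod (2 * m)) with hcdef
    set f1 : ((Fin (N + 1) → Fin m) → Bool) → (Fin (N + 1) → Fin k) → Fin k :=
      fun g x => ⟨(swapFun τ h g (fun i => c (x i))).val, by
        have := ZMod.val_lt (swapFun τ h g (fun i => c (x i))); omega⟩ with hf1def
    set p : Fin k → Prop := fun z => z.val < d with hpdef
    haveI : DecidablePred p := fun z => Nat.decLt _ _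
    have hf1p : ∀ g x, p (f1 g x) := by
      intro g x
      show (f1 g x).val < d
      show (swapFun τ h g (fun i => c (x i))).val < d
      have := ZMod.val_lt (swapFun τ h g (fun i => c (x i)))
      omega
    have hf1inj : ∀ g (i : Fin (N + 1)) (x : Fin (N + 1) → Fin k),
        (∀ j, j ≠ i → p (x j)) → ∀ a b, p a → p b →
        f1 g (Function.update x i a) = f1 g (Function.update x i b) → a = b := by
      intro g i x hrest a b hpa hpb heq
      have hv : (swapFun τ h g (fun i' => c (Function.update x i a i'))) =
          (swapFun τ h g (fun i' => c (Function.update x i b i'))) := by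
        apply ZMod.val_injective
        exact congrArg Fin.val heq
      have hca : (fun i' => c (Function.update x i a i')) =
          Function.update (fun i' => c (x i')) i (c a) := Function.comp_update c x i a
      have hcb : (fun i' => c (Function.update x i b i')) =
          Function.update (fun i' => c (x i')) i (c b) := Function.comp_update c x i b
      rw [hca, hcb] at hv
      have hinj := ((swapFun_isNQuasigroup τ hτ2 hτ0 h hh g) i (fun i' => c (x i'))).injective hv
      have hval := congrArg ZMod.val hinj
      rw [hcdef] at hval
      simp only [ZMod.val_natCast] at hval
      rw [Nat.mod_eq_of_lt (by omega : a.val < 2 * m),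
        Nat.mod_eq_of_lt (by omega : b.val < 2 * m)] at hval
      exact Fin.ext hval
    set Φ : ((Fin (N + 1) → Fin m) → Bool) →
        {f : (Fin (N + 1) → Fin k) → Fin k // IsNQuasigroup f} :=
      fun g => ⟨fun x => if ∀ i, p (x i) then f1 g x else f0 x,
        glue_isNQuasigroup p f0 (f1 g) hf0 hf0p (hf1p g) (hf1inj g)⟩ with hΦdef
    have hΦ : Function.Injective Φ := by
      intro g g' hgg
      funext v
      set xv : Fin (N + 1) → Fin k := fun i => ⟨(v i : ℕ), by have := (v i).isLt; omega⟩ with hxv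
      have hxvp : ∀ i, p (xv i) := by
        intro i
        show (xv i).val < d
        have := (v i).isLt
        show (v i : ℕ) < d
        omega
      have h1 := congrFun (congrArg Subtype.val hgg) xv
      simp only [hΦdef, if_pos hxvp] at h1
      have h2 : swapFun τ h g (fun i => c (xv i)) = swapFun τ h g' (fun i => c (xv i)) := by
        apply ZMod.val_injective
        exact congrArg Fin.val h1
      have h3 : (fun i => c (xv i)) = fun i => s (v i) := rfl
      rw [h3] at h2
      exact swapFun_eq_at τ hτ0 h s hs v h2
    exact card_le_numQuasigroups Φ hΦ
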